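/- Let Q be a prime (not necessarily unital) associative ring whose core H (the intersection of all nonzero two-sided ideals of Q) is nonzero, and let (R, L) be an orthogonal pair of Q. Then the additive subgroup generated by the products {l·h·r : l ∈ L, h ∈ H, r ∈ R} equals H. -/

import Mathlib

/-- A right ideal of a (not necessarily unital) ring: an additive subgroup `R` with `RQ ⊆ R`. -/
def IsRightIdeal {Q : Type*} [NonUnitalRing Q] (R : AddSubgroup Q) : Prop :=
  ∀ r ∈ R, ∀ x : Q, r * x ∈ R

/-- A left ideal of a (not necessarily unital) ring: an additive subgroup `L` with `QL ⊆ L`. -/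
def IsLeftIdeal {Q : Type*} [NonUnitalRing Q] (L : AddSubgroup Q) : Prop :=
  ∀ l ∈ L, ∀ x : Q, x * l ∈ L

/-- A two-sided ideal: an additive subgroup `I` with `QI ⊆ I` and `IQ ⊆ I`. -/
def IsTwoSidedIdealSub {Q : Type*} [NonUnitalRing Q] (I : AddSubgroup Q) : Prop :=
  (∀ a ∈ I, ∀ x : Q, x * a ∈ I) ∧ (∀ a ∈ I, ∀ x : Q, a * x ∈ I)

/-- The core of `Q`: the intersection of all nonzero two-sided ideals of `Q`. -/
def ringCore (Q : Type*) [NonUnitalRing Q] : AddSubgroup Q :=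
  sInf {I : AddSubgroup Q | IsTwoSidedIdealSub I ∧ I ≠ ⊥}

/-- A (not necessarily unital) ring is prime if `aQb = 0` implies `a = 0` or `b = 0`. -/
def IsPrimeRing (Q : Type*) [NonUnitalRing Q] : Prop :=
  ∀ a b : Q, (∀ x : Q, a * x * b = 0) → a = 0 ∨ b = 0

/-- An orthogonal pair: a nonzero right ideal `R` and a nonzero left ideal `L` with `LR = 0`. -/
def IsOrthPair {Q : Type*} [NonUnitalRing Q] (R L : AddSubgroup Q) : Prop :=
  IsRightIdeal R ∧ IsLeftIdeal L ∧ R ≠ ⊥ ∧ L ≠ ⊥ ∧ ∀ l ∈ L, ∀ r ∈ R, l * r = 0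

/-- For subsets `A`, `C` of `Q`, the additive subgroup generated by all products `a * c`. -/
def setMul {Q : Type*} [NonUnitalRing Q] (A C : Set Q) : AddSubgroup Q :=
  AddSubgroup.closure {x : Q | ∃ a ∈ A, ∃ c ∈ C, x = a * c}

/-- The core is a two-sided ideal. -/
lemma core_isTwoSided {Q : Type*} [NonUnitalRing Q] : IsTwoSidedIdealSub (ringCore Q) := by
  constructor <;> intro a ha x <;>
    · rw [ringCore, AddSubgroup.mem_sInf] at ha ⊢
      intro I hI
      first
        | exact hI.1.1 a (ha I hI) x
        | exact hI.1.2 a (ha I hI) x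

lemma exists_ne_zero_of_ne_bot {Q : Type*} [NonUnitalRing Q] {S : AddSubgroup Q}
    (h : S ≠ ⊥) : ∃ x ∈ S, x ≠ 0 := by
  obtain ⟨⟨x, hx⟩, hx0⟩ := AddSubgroup.ne_bot_iff_exists_ne_zero.mp h
  exact ⟨x, hx, by simpa using hx0⟩

/-- In a prime ring with nonzero core `H`, for an orthogonal pair `(R, L)` one has `LHR = H`. -/
theorem lhr_eq_core {Q : Type*} [NonUnitalRing Q]
    (hprime : IsPrimeRing Q) (hcore : ringCore Q ≠ ⊥)
    (R L : AddSubgroup Q) (h : IsOrthPair R L) :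
    AddSubgroup.closure
        {x : Q | ∃ l ∈ L, ∃ y ∈ ringCore Q, ∃ r ∈ R, x = l * y * r} = ringCore Q := by
  obtain ⟨hR, hL, hRne, hLne, _horth⟩ := h
  set S : Set Q := {x : Q | ∃ l ∈ L, ∃ y ∈ ringCore Q, ∃ r ∈ R, x = l * y * r} with hS
  set K : AddSubgroup Q := AddSubgroup.closure S with hK
  -- K is a two-sided ideal
  have hleft : ∀ a ∈ K, ∀ x : Q, x * a ∈ K := by
    intro a ha x
    induction ha using AddSubgroup.closure_induction with
    | mem a ha =>
      obtain ⟨l, hl, y, hy, r, hr, rfl⟩ := ha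
      apply AddSubgroup.subset_closure
      exact ⟨x * l, hL l hl x, y, hy, r, hr, by simp [mul_assoc]⟩
    | zero => simpa using K.zero_mem
    | add a b _ _ ha hb => simpa [mul_add] using K.add_mem ha hb
    | neg a _ ha => simpa [mul_neg] using K.neg_mem ha
  have hright : ∀ a ∈ K, ∀ x : Q, a * x ∈ K := by
    intro a ha x
    induction ha using AddSubgroup.closure_induction with
    | mem a ha =>
      obtain ⟨l, hl, y, hy, r, hr, rfl⟩ := ha
      apply AddSubgroup.subset_closure
      exact ⟨l, hl, y, hy, r * x, hR r hr x, by simp [mul_assoc]⟩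
    | zero => simpa using K.zero_mem
    | add a b _ _ ha hb => simpa [add_mul] using K.add_mem ha hb
    | neg a _ ha => simpa [neg_mul] using K.neg_mem ha
  -- K is nonzero
  have hKne : K ≠ ⊥ := by
    intro hbot
    obtain ⟨r, hr, hr0⟩ := exists_ne_zero_of_ne_bot hRne
    obtain ⟨l, hl, hl0⟩ := exists_ne_zero_of_ne_bot hLne
    obtain ⟨y, hy, hy0⟩ := exists_ne_zero_of_ne_bot hcore
    have hzero : ∀ l' ∈ L, ∀ y' ∈ ringCore Q, ∀ r' ∈ R, l' * y' * r' = 0 := by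
      intro l' hl' y' hy' r' hr'
      have : l' * y' * r' ∈ K := AddSubgroup.subset_closure ⟨l', hl', y', hy', r', hr', rfl⟩
      simpa [hbot] using this
    have key : ∀ x : Q, l * x * y = 0 := by
      intro x
      rcases hprime (l * x * y) r (fun z => by
        have hmem : x * y * z ∈ ringCore Q := by
          have := core_isTwoSided.1 _ (core_isTwoSided.2 y hy z) x
          rwa [← mul_assoc] at this
        have h0 := hzero l hl _ hmem r hr
        simpa [mul_assoc] using h0) with h1 | h2
      · exact h1
      · exact absurd h2 hr0
    rcases hprime l y key with h1 | h2
    · exact hl0 h1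
    · exact hy0 h2
  apply le_antisymm
  · -- K ≤ core : each generator lies in the core since the core is an ideal
    rw [hK]
    apply AddSubgroup.closure_le _ |>.mpr
    rintro x ⟨l, hl, y, hy, r, hr, rfl⟩
    exact core_isTwoSided.2 _ (core_isTwoSided.1 y hy l) r
  · -- core ≤ K : minimality of the core
    exact sInf_le ⟨⟨hleft, hright⟩, hKne⟩
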